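/- arXiv:2109.13422 — 3 statements merged into one kernel-verified Lean document; each statement's English description precedes it below -/
import Mathlib

section
/- If G is a 2-connected finite simple graph containing a path with ℓ edges, then G contains a cycle of length greater than √(2ℓ). -/
/-- A finite simple graph is 2-connected: it has at least 3 vertices and deleting
any single vertex leaves it connected. -/
def TwoConnected {V : Type*} [Fintype V] (G : SimpleGraph V) : Prop :=
  3 ≤ Fintype.card V ∧ ∀ v : V, (G.induce ({v}ᶜ : Set V)).Connected

section AuxLemmas

open SimpleGraph Walk

variable {V : Type*} {G : SimpleGraph V}

lemma aux_isPath_append {a b d : V} {p : G.Walk a b} {q : G.Walk b d}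
    (hp : p.IsPath) (hq : q.IsPath)
    (h : ∀ z, z ∈ p.support → z ∈ q.support → z = b) : (p.append q).IsPath := by
  rw [Walk.isPath_def, Walk.support_append, List.nodup_append]
  refine ⟨hp.support_nodup, hq.support_nodup.tail, ?_⟩
  intro z hz z' hz' hzz'
  subst hzz'
  have hb : b ∉ q.support.tail := by
    have h2 := hq.support_nodup
    rw [q.support_eq_cons] at h2
    exact (List.nodup_cons.mp h2).1
  have hzb : z = b := h z hz (List.mem_of_mem_tail hz')
  exact hb (hzb ▸ hz')

lemma aux_first_hit (S : Set V) [DecidablePred (· ∈ S)] :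
    ∀ {a b : V} (q : G.Walk a b), b ∈ S →
      ∃ m, m ∈ S ∧ ∃ (pre : G.Walk a m) (post : G.Walk m b),
        q = pre.append post ∧ ∀ z ∈ pre.support, z ∈ S → z = m := by
  intro a b q
  induction q with
  | nil =>
    intro hb
    exact ⟨_, hb, Walk.nil, Walk.nil, rfl, by intro z hz _; simpa using hz⟩
  | @cons a a₂ b h q ih =>
    intro hb
    by_cases ha : a ∈ S
    · exact ⟨a, ha, Walk.nil, Walk.cons h q, rfl, by intro z hz _; simpa using hz⟩
    · obtain ⟨m, hm, pre, post, heq, hpre⟩ := ih hb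
      refine ⟨m, hm, Walk.cons h pre, post, by rw [heq, Walk.cons_append], ?_⟩
      intro z hz hzS
      rw [Walk.support_cons, List.mem_cons] at hz
      rcases hz with rfl | hz
      · exact absurd hzS ha
      · exact hpre z hz hzS

lemma aux_filter_singleton {l : List V} {m : V} (p : V → Prop) [DecidablePred p]
    (hn : l.Nodup) (hm : m ∈ l) (hpm : p m) (hall : ∀ z ∈ l, p z → z = m) :
    (l.filter (fun z => decide (p z))).length = 1 := by
  have h1 : l.filter (fun z => decide (p z)) = [m] := by
    have hnf := hn.filter (fun z => decide (p z))
    have hmf : m ∈ l.filter (fun z => decide (p z)) := List.mem_filter.mpr ⟨hm, by simpa⟩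
    have hallf : ∀ z ∈ l.filter (fun z => decide (p z)), z = m := by
      intro z hz
      have := List.mem_filter.mp hz
      exact hall z this.1 (by simpa using this.2)
    rcases hf : l.filter (fun z => decide (p z)) with _ | ⟨x, t⟩
    · rw [hf] at hmf; simp at hmf
    · rcases t with _ | ⟨y, t'⟩
      · rw [hf] at hallf; simp_all
      · rw [hf] at hnf hallf
        have hx := hallf x (by simp)
        have hy := hallf y (by simp)
        subst hx
        rw [hy] at hnf
        simp at hnf
  rw [h1]; rfl

/-- Every vertex of a closed nontrivial walk lies in the tail of its support. -/
lemma aux_mem_support_tail {z : V} (C : G.Walk z z) (hC : ¬C.Nil) :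
    ∀ a ∈ C.support, a ∈ C.support.tail := by
  obtain ⟨w, hadj, q, rfl⟩ := Walk.not_nil_iff.mp hC
  intro a ha
  rw [Walk.support_cons, List.mem_cons] at ha
  rw [Walk.support_cons, List.tail_cons]
  rcases ha with rfl | ha
  · exact q.end_mem_support
  · exact ha

lemma aux_count_le [DecidableEq V] {u v z : V} (C : G.Walk z z) (hC : C.IsCycle)
    (p : G.Walk u v) (hp : p.IsPath) (hu : u ∈ C.support) :
    (p.support.tail.filter (fun x => decide (x ∈ C.support))).length ≤ C.length - 1 := by
  set L := p.support.tail.filter (fun x => decide (x ∈ C.support)) with hL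
  have hLnd : L.Nodup := (hp.support_nodup.tail).filter _
  obtain ⟨-, -, hTnd⟩ := (Walk.isCycle_def C).mp hC
  have hmemtail := aux_mem_support_tail C hC.not_nil
  have hsub : L.toFinset ⊆ (C.support.tail.toFinset).erase u := by
    intro x hx
    rw [List.mem_toFinset, hL, List.mem_filter] at hx
    obtain ⟨hx1, hx2⟩ := hx
    have hx2' : x ∈ C.support := by simpa using hx2
    refine Finset.mem_erase.mpr ⟨?_, List.mem_toFinset.mpr (hmemtail x hx2')⟩
    rintro rfl
    have h2 := hp.support_nodup
    rw [p.support_eq_cons] at h2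
    exact (List.nodup_cons.mp h2).1 hx1
  have h3 : L.length = L.toFinset.card := (List.toFinset_card_of_nodup hLnd).symm
  have h4 : (C.support.tail.toFinset).card = C.length := by
    rw [List.toFinset_card_of_nodup hTnd, List.length_tail, C.length_support]; omega
  have h5 : u ∈ C.support.tail.toFinset := List.mem_toFinset.mpr (hmemtail u hu)
  calc L.length = L.toFinset.card := h3
    _ ≤ ((C.support.tail.toFinset).erase u).card := Finset.card_le_card hsub
    _ = (C.support.tail.toFinset).card - 1 := Finset.card_erase_of_mem h5
    _ = C.length - 1 := by rw [h4]

lemma aux_seg [DecidableEq V] (S : Set V) [DecidablePred (· ∈ S)] :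
    ∀ (n : ℕ) {a b : V} (q : G.Walk a b), q.length ≤ n → q.IsPath → ¬q.Nil →
      a ∈ S → b ∈ S →
      ∃ (x y : V) (seg : G.Walk x y), seg.IsPath ∧ x ∈ S ∧ y ∈ S ∧ x ≠ y ∧
        1 ≤ seg.length ∧ (∀ z ∈ seg.support, z ∈ S → z = x ∨ z = y) ∧
        q.length ≤ (q.support.tail.filter (fun z => decide (z ∈ S))).length * seg.length := by
  intro n
  induction n with
  | zero =>
    intro a b q hlen hpath hnil ha hb
    exact absurd (Walk.nil_iff_length_eq.mpr (by omega)) hnil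
  | succ n ih =>
    intro a b q hlen hpath hnil ha hb
    obtain ⟨a₂, h, q', rfl⟩ := Walk.not_nil_iff.mp hnil
    obtain ⟨m, hm, pre, post, heq, hpre⟩ := aux_first_hit S q' hb
    have hq'path : q'.IsPath := hpath.of_cons
    have hanotq' : a ∉ q'.support := ((Walk.cons_isPath_iff h q').mp hpath).2
    have hq'path' : (pre.append post).IsPath := heq ▸ hq'path
    have hprepath : pre.IsPath := hq'path'.of_append_left
    have hpostpath : post.IsPath := hq'path'.of_append_right
    have hmpre : m ∈ pre.support := pre.end_mem_support
    have hsupq' : q'.support = pre.support ++ post.support.tail := by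
      rw [heq, Walk.support_append]
    have hmq' : m ∈ q'.support := by rw [hsupq']; exact List.mem_append_left _ hmpre
    have ham : a ≠ m := fun hh => hanotq' (hh ▸ hmq')
    have hcnt1 : (pre.support.filter (fun z => decide (z ∈ S))).length = 1 :=
      aux_filter_singleton _ hprepath.support_nodup hmpre hm hpre
    have htail : (Walk.cons h q').support.tail = q'.support := by simp
    have hcnt : ((Walk.cons h q').support.tail.filter (fun z => decide (z ∈ S))).length
        = 1 + (post.support.tail.filter (fun z => decide (z ∈ S))).length := by
      rw [htail, hsupq', List.filter_append, List.length_append, hcnt1]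
    have hlen' : (Walk.cons h q').length = 1 + pre.length + post.length := by
      rw [heq]; simp [Walk.length_append]; omega
    by_cases hpostnil : post.Nil
    · -- base : the whole walk is a single segment
      have hmb : m = b := Walk.eq_of_length_eq_zero (Walk.nil_iff_length_eq.mp hpostnil)
      have hposttail : post.support.tail = [] := by
        have h2 := post.length_support
        rw [Walk.nil_iff_length_eq.mp hpostnil] at h2
        cases hsp : post.support with
        | nil => simp
        | cons x t => rw [hsp] at h2; simp at h2; simp [h2]
      have hab : a ≠ b := fun hh => hanotq' (hh ▸ q'.end_mem_support)
      refine ⟨a, b, Walk.cons h q', hpath, ha, hb, hab, by simp, ?_, ?_⟩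
      · intro z hz hzS
        rw [Walk.support_cons, List.mem_cons] at hz
        rcases hz with rfl | hz
        · exact Or.inl rfl
        · rw [hsupq', hposttail, List.append_nil] at hz
          exact Or.inr (hmb ▸ hpre z hz hzS)
      · rw [hcnt, hposttail]; simp
    · -- recursive case
      have hmb : m ≠ b := by
        intro hh
        subst hh
        have h5 : post = Walk.nil := (Walk.isPath_iff_eq_nil (p := post)).mp hpostpath
        rw [h5] at hpostnil
        exact hpostnil Walk.Nil.nil
      have hpostlen : post.length ≤ n := by
        have h3 := hlen
        rw [hlen'] at h3
        omega
      obtain ⟨x, y, seg', hseg'path, hx, hy, hxy, hseg'len, hseg'prop, hseg'ineq⟩ :=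
        ih post hpostlen hpostpath hpostnil hm hb
      have hanotpre : a ∉ pre.support := fun hh =>
        hanotq' (by rw [hsupq']; exact List.mem_append_left _ hh)
      have hs1path : (Walk.cons h pre).IsPath := by
        rw [Walk.cons_isPath_iff]
        exact ⟨hprepath, hanotpre⟩
      have hs1prop : ∀ z ∈ (Walk.cons h pre).support, z ∈ S → z = a ∨ z = m := by
        intro z hz hzS
        rw [Walk.support_cons, List.mem_cons] at hz
        rcases hz with rfl | hz
        · exact Or.inl rfl
        · exact Or.inr (hpre z hz hzS)
      by_cases hcmp : seg'.length ≤ (Walk.cons h pre).length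
      · refine ⟨a, m, Walk.cons h pre, hs1path, ha, hm, ham, by simp, hs1prop, ?_⟩
        rw [hcnt, hlen']
        have h6 : post.length ≤
            (post.support.tail.filter (fun z => decide (z ∈ S))).length * seg'.length :=
          hseg'ineq
        have h8 : (Walk.cons h pre).length = 1 + pre.length := by simp; omega
        rw [h8] at hcmp
        have h7 : (post.support.tail.filter (fun z => decide (z ∈ S))).length * seg'.length ≤
            (post.support.tail.filter (fun z => decide (z ∈ S))).length *
              (1 + pre.length) := Nat.mul_le_mul_left _ hcmp
        rw [h8, Nat.add_mul, one_mul]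
        omega
      · push_neg at hcmp
        refine ⟨x, y, seg', hseg'path, hx, hy, hxy, hseg'len, hseg'prop, ?_⟩
        rw [hcnt, hlen']
        have h8 : (Walk.cons h pre).length = 1 + pre.length := by simp; omega
        have h9 : 1 + pre.length ≤ seg'.length := by rw [← h8]; omega
        rw [Nat.add_mul, one_mul]
        have h6 := hseg'ineq
        omega

lemma aux_arcs [DecidableEq V] {z x y : V} (C : G.Walk z z) (hC : C.IsCycle)
    (hx : x ∈ C.support) (hy : y ∈ C.support) (hxy : x ≠ y) :
    ∃ (A1 : G.Walk x y) (A2 : G.Walk y x), A1.IsPath ∧ A2.IsPath ∧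
      A1.length + A2.length = C.length ∧
      (∀ w ∈ A1.support, w ∈ C.support) ∧ (∀ w ∈ A2.support, w ∈ C.support) ∧
      (∀ w ∈ C.support, w ∈ A1.support ∨ w ∈ A2.support) := by
  set C' := C.rotate x hx with hC'def
  have hC' : C'.IsCycle := hC.rotate hx
  have hmem : ∀ w, w ∈ C'.support ↔ w ∈ C.support := by
    intro w
    constructor
    · intro h
      exact List.mem_of_mem_tail
        ((Walk.support_rotate C x hx).mem_iff.mp (aux_mem_support_tail C' hC'.not_nil w h))
    · intro h
      exact List.mem_of_mem_tail
        ((Walk.support_rotate C x hx).mem_iff.mpr (aux_mem_support_tail C hC.not_nil w h))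
  have hy' : y ∈ C'.support := (hmem y).mpr hy
  set A1 := C'.takeUntil y hy' with hA1def
  set A2 := C'.dropUntil y hy' with hA2def
  have hspec : A1.append A2 = C' := C'.take_spec hy'
  have hClen : C'.length = C.length := by
    have h1 := congrArg Walk.length (C.take_spec hx)
    rw [Walk.length_append] at h1
    have h2 : C'.length = (C.dropUntil x hx).length + (C.takeUntil x hx).length := by
      rw [hC'def, Walk.rotate, Walk.length_append]
    omega
  have hlensum : A1.length + A2.length = C.length := by
    have h1 := congrArg Walk.length hspec
    rw [Walk.length_append] at h1
    omega
  have hsup : C'.support = A1.support ++ A2.support.tail := by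
    rw [← hspec, Walk.support_append]
  obtain ⟨-, -, htnd⟩ := (Walk.isCycle_def C').mp hC'
  have hA1len : A1.length ≠ 0 := fun hh => hxy (Walk.eq_of_length_eq_zero hh)
  have hA2len : A2.length ≠ 0 := fun hh => hxy (Walk.eq_of_length_eq_zero hh).symm
  have ht : C'.support.tail = A1.support.tail ++ A2.support.tail := by
    have h3 : C'.support = x :: C'.support.tail := C'.support_eq_cons
    have h4 : A1.support = x :: A1.support.tail := A1.support_eq_cons
    rw [h3, h4] at hsup
    exact (List.cons.injEq _ _ _ _ ▸ hsup).2
  rw [ht] at htnd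
  have hdisj := List.disjoint_of_nodup_append htnd
  have hyA1t : y ∈ A1.support.tail := by
    have h5 := A1.end_mem_support
    rw [A1.support_eq_cons, List.mem_cons] at h5
    rcases h5 with h5 | h5
    · exact absurd h5.symm hxy
    · exact h5
  have hxA2t : x ∈ A2.support.tail := by
    have h5 := A2.end_mem_support
    rw [A2.support_eq_cons, List.mem_cons] at h5
    rcases h5 with h5 | h5
    · exact absurd h5 hxy
    · exact h5
  have hA1path : A1.IsPath := by
    apply Walk.IsPath.mk'
    rw [A1.support_eq_cons, List.nodup_cons]
    exact ⟨fun hh => hdisj hh hxA2t, htnd.of_append_left⟩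
  have hA2path : A2.IsPath := by
    apply Walk.IsPath.mk'
    rw [A2.support_eq_cons, List.nodup_cons]
    exact ⟨fun hh => hdisj hyA1t hh, htnd.of_append_right⟩
  refine ⟨A1, A2, hA1path, hA2path, hlensum, ?_, ?_, ?_⟩
  · intro w hw
    exact (hmem w).mp (C'.support_takeUntil_subset hy' hw)
  · intro w hw
    exact (hmem w).mp (C'.support_dropUntil_subset hy' hw)
  · intro w hw
    have h6 : w ∈ A1.support ++ A2.support.tail := by rw [← hsup]; exact (hmem w).mpr hw
    rcases List.mem_append.mp h6 with h6 | h6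
    · exact Or.inl h6
    · exact Or.inr (List.mem_of_mem_tail h6)

lemma aux_glue {x y : V} (hxy : x ≠ y) (A : G.Walk y x) (r : G.Walk x y)
    (hA : A.IsPath) (hr : r.IsPath) (hA2 : 2 ≤ A.length)
    (hint : ∀ z, z ∈ A.support → z ∈ r.support → z = x ∨ z = y) :
    ∃ D : G.Walk y y, D.IsCycle ∧ D.length = A.length + r.length ∧
      ∀ z, z ∈ A.support ∨ z ∈ r.support → z ∈ D.support := by
  have hnil : ¬A.Nil := Walk.not_nil_iff_lt_length.mpr (by omega)
  obtain ⟨a1, h, A', rfl⟩ := Walk.not_nil_iff.mp hnil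
  have hA'path : A'.IsPath := hA.of_cons
  have hynotA' : y ∉ A'.support := ((Walk.cons_isPath_iff h A').mp hA).2
  have hsubA' : ∀ z ∈ A'.support, z ∈ (Walk.cons h A').support := by
    intro z hz; rw [Walk.support_cons]; exact List.mem_cons_of_mem _ hz
  have hpathmid : (A'.append r).IsPath := by
    apply aux_isPath_append hA'path hr
    intro w hw hw'
    rcases hint w (hsubA' w hw) hw' with rfl | rfl
    · rfl
    · exact absurd hw hynotA'
  have hedge : s(y, a1) ∉ (A'.append r).edges := by
    intro he
    rw [Walk.edges_append, List.mem_append] at he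
    rcases he with he | he
    · exact hynotA' (Walk.fst_mem_support_of_mem_edges A' he)
    · have ha1r : a1 ∈ r.support := Walk.snd_mem_support_of_mem_edges r he
      have ha1A : a1 ∈ (Walk.cons h A').support := hsubA' a1 A'.start_mem_support
      rcases hint a1 ha1A ha1r with rfl | rfl
      · -- a1 = x : then A' is a path from x to x, hence nil, contradicting 2 ≤ length
        have h5 : A' = Walk.nil := (Walk.isPath_iff_eq_nil (p := A')).mp hA'path
        rw [h5] at hA2
        simp at hA2
      · exact G.irrefl h
  refine ⟨Walk.cons h (A'.append r), ?_, ?_, ?_⟩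
  · exact (Walk.cons_isCycle_iff (A'.append r) h).mpr ⟨hpathmid, hedge⟩
  · simp [Walk.length_append]; omega
  · intro z hz
    rw [Walk.support_cons, List.mem_cons]
    rcases hz with hz | hz
    · rw [Walk.support_cons, List.mem_cons] at hz
      rcases hz with rfl | hz
      · exact Or.inl rfl
      · exact Or.inr ((Walk.mem_support_append_iff _ _).mpr (Or.inl hz))
    · exact Or.inr ((Walk.mem_support_append_iff _ _).mpr (Or.inr hz))

variable [Fintype V]

lemma aux_third (h3 : 3 ≤ Fintype.card V) (a b : V) : ∃ w : V, w ≠ a ∧ w ≠ b := by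
  haveI := Classical.decEq V
  by_contra hc
  push_neg at hc
  have hsub : (Finset.univ : Finset V) ⊆ {a, b} := by
    intro w _
    rcases eq_or_ne w a with rfl | hne
    · simp
    · simp [hc w hne]
  have h4 := Finset.card_le_card hsub
  rw [Finset.card_univ] at h4
  have h5 : ({a, b} : Finset V).card ≤ 2 := by
    refine le_trans (Finset.card_insert_le _ _) ?_
    simp
  omega

lemma aux_avoid_walk (h2 : TwoConnected G) (w a b : V) (ha : a ≠ w) (hb : b ≠ w) :
    ∃ p : G.Walk a b, w ∉ p.support := by
  have hconn := h2.2 w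
  have hA : a ∈ ({w}ᶜ : Set V) := by simpa
  have hB : b ∈ ({w}ᶜ : Set V) := by simpa
  obtain ⟨q⟩ := hconn.preconnected ⟨a, hA⟩ ⟨b, hB⟩
  refine ⟨q.map (SimpleGraph.Embedding.induce ({w}ᶜ : Set V)).toHom, ?_⟩
  change w ∉ (q.map (SimpleGraph.Embedding.induce ({w}ᶜ : Set V)).toHom).support
  rw [Walk.support_map]
  intro hw
  obtain ⟨s, _, hval⟩ := List.mem_map.mp hw
  exact s.prop hval

lemma aux_conn (h2 : TwoConnected G) : G.Connected := by
  have h31 := h2.1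
  have hpos : 0 < Fintype.card V := by omega
  rw [connected_iff]
  refine ⟨?_, Fintype.card_pos_iff.mp hpos⟩
  intro a b
  rcases eq_or_ne a b with rfl | hab
  · exact Reachable.refl a
  · obtain ⟨w, hwa, hwb⟩ := aux_third h2.1 a b
    obtain ⟨p, _⟩ := aux_avoid_walk h2 w a b (Ne.symm hwa) (Ne.symm hwb)
    exact ⟨p⟩

lemma aux_cycle_of_adj (h2 : TwoConnected G) {u v : V} (h : G.Adj u v) :
    ∃ (z : V) (C : G.Walk z z), C.IsCycle ∧ u ∈ C.support ∧ v ∈ C.support := by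
  classical
  set H := G \ fromEdgeSet {s(u, v)} with hH
  have hHadj : ∀ {a b : V}, G.Adj a b → s(a, b) ≠ s(u, v) → H.Adj a b := by
    intro a b hab hne
    rw [hH, sdiff_adj, fromEdgeSet_adj]
    exact ⟨hab, fun hcon => hne (by simpa using hcon.1)⟩
  have havoid : ∀ {a b : V} (p : G.Walk a b) (w : V), (w = u ∨ w = v) → w ∉ p.support →
      H.Reachable a b := by
    intro a b p
    induction p with
    | nil => intro w _ _; exact Reachable.refl _
    | @cons a a₂ b hadj q ihq =>
      intro w hw hnsup
      rw [Walk.support_cons, List.mem_cons] at hnsup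
      push_neg at hnsup
      refine (Adj.reachable (hHadj hadj ?_)).trans (ihq w hw hnsup.2)
      intro hee
      rw [Sym2.eq_iff] at hee
      have hwmem : w = a ∨ w = a₂ := by
        rcases hw with rfl | rfl <;> rcases hee with ⟨h1, h2⟩ | ⟨h1, h2⟩
        · exact Or.inl h1.symm
        · exact Or.inr h2.symm
        · exact Or.inr h2.symm
        · exact Or.inl h1.symm
      rcases hwmem with rfl | rfl
      · exact hnsup.1 rfl
      · exact hnsup.2 q.start_mem_support
  have hdich : ∀ x : V, H.Reachable x u ∨ H.Reachable x v := by
    intro x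
    obtain ⟨p⟩ := (aux_conn h2).preconnected x u
    suffices hsuff : ∀ {c d : V} (p : G.Walk c d),
        (H.Reachable d u ∨ H.Reachable d v) → (H.Reachable c u ∨ H.Reachable c v) by
      exact hsuff p (Or.inl (Reachable.refl u))
    intro c d p
    induction p with
    | nil => exact id
    | @cons a a₂ d hadj q ih =>
      intro hd
      by_cases hee : s(a, a₂) = s(u, v)
      · rw [Sym2.eq_iff] at hee
        rcases hee with ⟨rfl, rfl⟩ | ⟨rfl, rfl⟩
        · exact Or.inl (Reachable.refl _)
        · exact Or.inr (Reachable.refl _)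
      · have hHa : H.Adj a a₂ := hHadj hadj hee
        rcases ih hd with h1 | h1
        · exact Or.inl (hHa.reachable.trans h1)
        · exact Or.inr (hHa.reachable.trans h1)
  have hreach : H.Reachable u v := by
    by_contra hnr
    by_cases hall : ∀ x : V, x ≠ v → H.Reachable x u
    · obtain ⟨zz, hzzu, hzzv⟩ := aux_third h2.1 u v
      obtain ⟨p, hp⟩ := aux_avoid_walk h2 u v zz h.ne' hzzu
      have hr1 : H.Reachable v zz := havoid p u (Or.inl rfl) hp
      have hr2 : H.Reachable zz u := hall zz hzzv
      exact hnr (hr1.trans hr2).symm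
    · push_neg at hall
      obtain ⟨x, hxv, hxu⟩ := hall
      have hx2 : H.Reachable x v := (hdich x).resolve_left hxu
      obtain ⟨p, hp⟩ := aux_avoid_walk h2 v u x h.ne hxv
      have hr1 : H.Reachable u x := havoid p v (Or.inr rfl) hp
      exact hnr (hr1.trans hx2)
  obtain ⟨z, C, hC, he⟩ := adj_and_reachable_delete_edges_iff_exists_cycle.mp ⟨h, hreach⟩
  exact ⟨z, C, hC, Walk.fst_mem_support_of_mem_edges C he,
    Walk.snd_mem_support_of_mem_edges C he⟩

lemma aux_common_cycle (h2 : TwoConnected G) :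
    ∀ (d : ℕ) {u v : V}, G.dist u v ≤ d → u ≠ v →
      ∃ (z : V) (C : G.Walk z z), C.IsCycle ∧ u ∈ C.support ∧ v ∈ C.support := by
  classical
  have hconn := aux_conn h2
  intro d
  induction d with
  | zero =>
    intro u v hd hne
    have := hconn.pos_dist_of_ne hne
    omega
  | succ d ih =>
    intro u v hd hne
    have hdpos : 0 < G.dist u v := hconn.pos_dist_of_ne hne
    by_cases hd1 : G.dist u v = 1
    · exact aux_cycle_of_adj h2 (dist_eq_one_iff_adj.mp hd1)
    · obtain ⟨p, hp⟩ := exists_walk_of_dist_ne_zero (G := G) (u := u) (v := v) (by omega)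
      have hpnil : ¬p.reverse.Nil := by
        rw [Walk.nil_iff_length_eq, Walk.length_reverse, hp]; omega
      obtain ⟨w, hvw, q, hqeq⟩ := Walk.not_nil_iff.mp hpnil
      have hqlen : q.length = G.dist u v - 1 := by
        have h6 := congrArg Walk.length hqeq
        rw [Walk.length_reverse, hp] at h6
        simp only [Walk.length_cons] at h6
        omega
      have hdvw : G.dist w v ≤ 1 := by
        have h7 := dist_le (Walk.cons hvw.symm Walk.nil : G.Walk w v)
        simpa using h7
      have hduw_le : G.dist u w ≤ G.dist u v - 1 := by
        have h8 := dist_le q.reverse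
        rwa [Walk.length_reverse, hqlen] at h8
      have htri : G.dist u v ≤ G.dist u w + G.dist w v := hconn.dist_triangle
      have hduw : G.dist u w = G.dist u v - 1 := by omega
      have huw : u ≠ w := by
        intro hh
        subst hh
        rw [dist_self] at hduw
        omega
      have hihd : G.dist u w ≤ d := by omega
      obtain ⟨z, C, hC, huC, hwC⟩ := ih (u := u) (v := w) hihd huw
      by_cases hv : v ∈ C.support
      · exact ⟨z, C, hC, huC, hv⟩
      · have hvnw : v ≠ w := hvw.ne
        have hvnu : v ≠ u := fun hh => hv (hh ▸ huC)
        obtain ⟨q0, hq0w⟩ := aux_avoid_walk h2 w v u hvnw huw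
        obtain ⟨x, hxS, pre, post, hdecomp, hpreS⟩ :=
          aux_first_hit {t | t ∈ C.support} q0 (by exact huC)
        set r := pre.bypass with hrdef
        have hrpath := pre.bypass_isPath
        have hrsub : ∀ t ∈ r.support, t ∈ pre.support := fun t ht => pre.support_bypass_subset ht
        have hxS' : x ∈ C.support := hxS
        have hrS : ∀ t ∈ r.support, t ∈ C.support → t = x := fun t ht ht' =>
          hpreS t (hrsub t ht) ht'
        have hwr : w ∉ r.support := by
          intro hh
          apply hq0w
          rw [hdecomp]
          exact Walk.subset_support_append_left _ _ (hrsub w hh)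
        have hxw : x ≠ w := fun hh => hwr (hh ▸ r.end_mem_support)
        obtain ⟨A1, A2, hA1p, hA2p, _, hA1sub, hA2sub, hcov⟩ :=
          aux_arcs C hC hxS' hwC hxw
        obtain ⟨B, hBpath, hBsub, huB⟩ :
            ∃ B : G.Walk w x, B.IsPath ∧ (∀ t ∈ B.support, t ∈ C.support) ∧ u ∈ B.support := by
          by_cases hu2 : u ∈ A2.support
          · exact ⟨A2, hA2p, hA2sub, hu2⟩
          · refine ⟨A1.reverse, hA1p.reverse, ?_, ?_⟩
            · intro t ht
              rw [Walk.support_reverse, List.mem_reverse] at ht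
              exact hA1sub t ht
            · rw [Walk.support_reverse, List.mem_reverse]
              exact (hcov u huC).resolve_right hu2
        have hmidpath : (B.append r.reverse).IsPath := by
          apply aux_isPath_append hBpath hrpath.reverse
          intro t ht ht'
          rw [Walk.support_reverse, List.mem_reverse] at ht'
          exact hrS t ht' (hBsub t ht)
        have hedge : s(v, w) ∉ (B.append r.reverse).edges := by
          intro he
          rw [Walk.edges_append, List.mem_append] at he
          rcases he with he | he
          · exact hv (hBsub v (Walk.fst_mem_support_of_mem_edges B he))
          · rw [Walk.edges_reverse, List.mem_reverse] at he
            exact hwr (Walk.snd_mem_support_of_mem_edges r he)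
        refine ⟨v, Walk.cons hvw (B.append r.reverse), ?_, ?_, ?_⟩
        · exact (Walk.cons_isCycle_iff _ hvw).mpr ⟨hmidpath, hedge⟩
        · rw [Walk.support_cons, List.mem_cons]
          exact Or.inr ((Walk.mem_support_append_iff _ _).mpr (Or.inl huB))
        · exact Walk.start_mem_support _

theorem dirac_long_cycle_aux {V : Type*} [Fintype V] (G : SimpleGraph V)
    (h2 : TwoConnected G) (ℓ : ℕ) (u v : V) (p : G.Walk u v)
    (hp : p.IsPath) (hlen : p.length = ℓ) :
    ∃ (w : V) (c : G.Walk w w), c.IsCycle ∧ (c.length : ℝ) > Real.sqrt (2 * ℓ) := by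
  classical
  by_cases hl0 : ℓ = 0
  · -- trivial case : any cycle works
    subst hl0
    obtain ⟨b, hbu, -⟩ := aux_third h2.1 u u
    obtain ⟨q⟩ := (aux_conn h2).preconnected u b
    have hqnil : ¬q.Nil := fun hn =>
      hbu (Walk.eq_of_length_eq_zero (Walk.nil_iff_length_eq.mp hn)).symm
    obtain ⟨a₂, hadj, -, -⟩ := Walk.not_nil_iff.mp hqnil
    obtain ⟨z, C, hC, -, -⟩ := aux_cycle_of_adj h2 hadj
    refine ⟨z, C, hC, ?_⟩
    have h3 := hC.three_le_length
    have : (0:ℝ) < C.length := by exact_mod_cast (by omega : 0 < C.length)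
    simpa using this
  · have hl1 : 1 ≤ ℓ := by omega
    have hne : u ≠ v := by
      rintro rfl
      rw [(Walk.isPath_iff_eq_nil (p := p)).mp hp] at hlen
      simp at hlen
      omega
    obtain ⟨z, C, hC, huC, hvC⟩ := aux_common_cycle h2 (G.dist u v) le_rfl hne
    have hc3 : 3 ≤ C.length := hC.three_le_length
    set S : Set V := {t | t ∈ C.support} with hSdef
    have hpnil : ¬p.Nil := by rw [Walk.nil_iff_length_eq, hlen]; omega
    obtain ⟨x, y, seg, hsegpath, hxS, hyS, hxy, hseg1, hsegprop, hsegineq⟩ :=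
      aux_seg S ℓ p (le_of_eq hlen) hp hpnil (by exact huC) (by exact hvC)
    -- bound the number of C-vertices on p
    have hfiltereq : p.support.tail.filter (fun t => decide (t ∈ S)) =
        p.support.tail.filter (fun t => decide (t ∈ C.support)) := by
      apply List.filter_congr
      intro t _
      simp [hSdef]
    have hcnt_le : (p.support.tail.filter (fun t => decide (t ∈ S))).length ≤ C.length - 1 := by
      rw [hfiltereq]
      exact aux_count_le C hC p hp huC
    have hlseg : ℓ ≤ (C.length - 1) * seg.length := by
      calc ℓ = p.length := hlen.symm
        _ ≤ (p.support.tail.filter (fun t => decide (t ∈ S))).length * seg.length := hsegineq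
        _ ≤ (C.length - 1) * seg.length := Nat.mul_le_mul_right _ hcnt_le
    have hls : ℓ + seg.length ≤ C.length * seg.length := by
      have h9 : (C.length - 1) * seg.length + seg.length = C.length * seg.length := by
        have hc1 : C.length - 1 + 1 = C.length := by omega
        rw [← Nat.succ_mul, Nat.succ_eq_add_one, hc1]
      omega
    -- the long arc
    have hxC : x ∈ C.support := hxS
    have hyC : y ∈ C.support := hyS
    obtain ⟨A1, A2, hA1p, hA2p, hsum, hA1sub, hA2sub, -⟩ := aux_arcs C hC hxC hyC hxy
    obtain ⟨A, hApath, hAsub, hAlen⟩ :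
        ∃ A : G.Walk y x, A.IsPath ∧ (∀ t ∈ A.support, t ∈ C.support) ∧
          C.length ≤ 2 * A.length := by
      by_cases hcmp : A1.length ≤ A2.length
      · exact ⟨A2, hA2p, hA2sub, by omega⟩
      · refine ⟨A1.reverse, hA1p.reverse, ?_, ?_⟩
        · intro t ht
          rw [Walk.support_reverse, List.mem_reverse] at ht
          exact hA1sub t ht
        · rw [Walk.length_reverse]; omega
    have hA2len : 2 ≤ A.length := by omega
    obtain ⟨D, hD, hDlen, -⟩ := aux_glue hxy A seg hApath hsegpath hA2len
      (fun t ht ht' => hsegprop t ht' (hAsub t ht))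
    refine ⟨y, D, hD, ?_⟩
    have hDpos : (0:ℝ) < D.length := by
      have := hD.three_le_length
      exact_mod_cast (by omega : 0 < D.length)
    rw [gt_iff_lt]
    rw [Real.sqrt_lt' hDpos]
    rw [hDlen]
    have hlsR : (ℓ:ℝ) + (seg.length:ℝ) ≤ (C.length:ℝ) * (seg.length:ℝ) := by
      exact_mod_cast hls
    have hca : (C.length:ℝ) ≤ 2 * (A.length:ℝ) := by exact_mod_cast hAlen
    have hc3R : (3:ℝ) ≤ (C.length:ℝ) := by exact_mod_cast hc3
    have hs1R : (1:ℝ) ≤ (seg.length:ℝ) := by exact_mod_cast hseg1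
    push_cast
    nlinarith [sq_nonneg ((C.length:ℝ) - 2*(seg.length:ℝ)),
      mul_nonneg (sub_nonneg.mpr hca) (by positivity : (0:ℝ) ≤ (seg.length:ℝ)),
      mul_nonneg (sub_nonneg.mpr hca) (by positivity : (0:ℝ) ≤ 2*(A.length:ℝ) + (C.length:ℝ))]

end AuxLemmas

/-- Dirac's lemma: a 2-connected graph with a path of ℓ edges contains a cycle of
length greater than √(2ℓ). -/
theorem dirac_long_cycle {V : Type*} [Fintype V] (G : SimpleGraph V)
    (h2 : TwoConnected G) (ℓ : ℕ) (u v : V) (p : G.Walk u v)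
    (hp : p.IsPath) (hlen : p.length = ℓ) :
    ∃ (w : V) (c : G.Walk w w), c.IsCycle ∧ (c.length : ℝ) > Real.sqrt (2 * ℓ) :=
  dirac_long_cycle_aux G h2 ℓ u v p hp hlen
end

section
/- If G is a 2-connected finite simple graph whose longest cycle has length c (circumference c), then every path in G has fewer than c²/2 edges. -/
set_option linter.unusedSectionVars false

namespace DiracAux

open SimpleGraph

variable {V : Type*} [Fintype V] {G : SimpleGraph V}

lemma exists_third (h3 : 3 ≤ Fintype.card V) (a b : V) : ∃ z : V, z ≠ a ∧ z ≠ b := by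
  classical
  by_contra h
  push_neg at h
  have hsub : (Finset.univ : Finset V) ⊆ {a, b} := by
    intro z _
    have := h z
    by_cases hz : z = a
    · simp [hz]
    · simp [this hz]
  have h1 := Finset.card_le_card hsub
  have hb : ({a, b} : Finset V).card ≤ 2 :=
    (Finset.card_insert_le _ _).trans (by simp)
  rw [Finset.card_univ] at h1
  omega

lemma walk_avoiding (hconn : ∀ v : V, (G.induce ({v}ᶜ : Set V)).Connected)
    (w a b : V) (ha : a ≠ w) (hb : b ≠ w) :
    ∃ q : G.Walk a b, q.IsPath ∧ w ∉ q.support := by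
  classical
  have hr := (hconn w).preconnected ⟨a, by simp [ha]⟩ ⟨b, by simp [hb]⟩
  obtain ⟨q0⟩ := hr
  let emb := SimpleGraph.Embedding.induce (G := G) ({w}ᶜ : Set V)
  refine ⟨(q0.map emb.toHom).bypass, Walk.bypass_isPath _, fun hmem => ?_⟩
  have := Walk.support_bypass_subset _ hmem
  replace this := Eq.mp (congrArg (w ∈ ·) (Walk.support_map emb.toHom q0)) this
  obtain ⟨⟨y, hy⟩, -, hy2⟩ := List.mem_map.mp this
  apply hy
  have : y = w := hy2
  simp [this]

lemma conn_of_two (h3 : 3 ≤ Fintype.card V)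
    (hconn : ∀ v : V, (G.induce ({v}ᶜ : Set V)).Connected) : G.Connected := by
  have hne : Nonempty V := Fintype.card_pos_iff.mp (by omega)
  rw [connected_iff]
  refine ⟨fun a b => ?_, hne⟩
  obtain ⟨z, hza, hzb⟩ := exists_third h3 a b
  obtain ⟨q, -, -⟩ := walk_avoiding hconn z a b (Ne.symm hza) (Ne.symm hzb)
  exact ⟨q⟩

/-- u has a neighbor different from v, provided u ≠ v. -/
lemma exists_other_neighbor (h3 : 3 ≤ Fintype.card V)
    (hconn : ∀ v : V, (G.induce ({v}ᶜ : Set V)).Connected)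
    (u v : V) (huv : u ≠ v) : ∃ w : V, G.Adj u w ∧ w ≠ v := by
  classical
  obtain ⟨z, hzu, hzv⟩ := exists_third h3 u v
  have hr := (hconn v).preconnected ⟨u, by simp [huv]⟩ ⟨z, by simp [hzv]⟩
  obtain ⟨q0⟩ := hr
  have hne : (⟨u, by simp [huv]⟩ : ({v}ᶜ : Set V)) ≠ ⟨z, by simp [hzv]⟩ := by
    simp [Subtype.ext_iff]; exact fun h => hzu h.symm
  obtain ⟨b, h, q1, -⟩ := q0.exists_eq_cons_of_ne hne
  refine ⟨b.val, h, b.prop⟩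

lemma edge_start_of_path {u v y : V} {p : G.Walk u v} (hp : p.IsPath)
    (h : s(u, y) ∈ p.edges) : ∃ (h' : G.Adj u y) (q : G.Walk y v), p = Walk.cons h' q := by
  cases p with
  | nil => simp at h
  | cons h' q =>
    rename_i x
    rw [Walk.edges_cons, List.mem_cons] at h
    rcases h with h | h
    · rw [Sym2.eq_iff] at h
      rcases h with ⟨-, rfl⟩ | ⟨rfl, rfl⟩
      · exact ⟨h', q, rfl⟩
      · exact absurd rfl h'.ne
    · exact absurd (Walk.fst_mem_support_of_mem_edges q h)
        ((Walk.cons_isPath_iff _ _).mp hp).2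

lemma jump {c : ℕ} (hmax : ∀ (w : V) (d : G.Walk w w), d.IsCycle → d.length ≤ c)
    (hc : 2 ≤ c) {v : V} :
    ∀ {u : V} (Q : G.Walk u v) (P : G.Walk u v), P.IsPath →
      P.length ≤ Q.length * (c - 1) := by
  classical
  intro u Q
  induction Q with
  | nil =>
    intro P hP
    rw [(Walk.isPath_iff_eq_nil (p := P)).mp hP]
    simp
  | @cons a b w h Q₁ ih =>
    intro P hP
    by_cases h1 : b ∈ P.support
    · have ht := P.take_spec h1
      have hlen : (P.takeUntil b h1).length + (P.dropUntil b h1).length = P.length := by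
        rw [← Walk.length_append, ht]
      have hTpath : (P.takeUntil b h1).IsPath := hP.takeUntil h1
      have hTle : (P.takeUntil b h1).length ≤ c - 1 := by
        by_cases ha : (P.takeUntil b h1).length ≤ 1
        · omega
        · have hcyc : (Walk.cons h (P.takeUntil b h1).reverse).IsCycle := by
            rw [Walk.cons_isCycle_iff]
            refine ⟨hTpath.reverse, fun he => ?_⟩
            rw [Walk.edges_reverse, List.mem_reverse] at he
            obtain ⟨h', q, hq⟩ := edge_start_of_path hTpath he
            have hq2 : q.IsPath := by
              rw [hq, Walk.cons_isPath_iff] at hTpath; exact hTpath.1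
            have : q = Walk.nil := (Walk.isPath_iff_eq_nil (p := q)).mp hq2
            rw [hq, this] at ha; simp at ha
          have := hmax a _ hcyc
          simp only [Walk.length_cons, Walk.length_reverse] at this
          omega
      have hrec := ih (P.dropUntil b h1) (hP.dropUntil h1)
      simp only [Walk.length_cons, Nat.succ_mul]
      omega
    · have hP' : (Walk.cons h.symm P).IsPath := by
        rw [Walk.cons_isPath_iff]; exact ⟨hP, h1⟩
      have := ih (Walk.cons h.symm P) hP'
      simp only [Walk.length_cons, Nat.succ_mul] at this ⊢
      omega

lemma mem_support_rotate_iff [DecidableEq V] {x z : V} {D : G.Walk z z} (hx : x ∈ D.support)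
    {u : V} : u ∈ (D.rotate _ hx).support ↔ u ∈ D.support := by
  rw [Walk.rotate, Walk.mem_support_append_iff]
  conv_rhs => rw [← Walk.take_spec D hx, Walk.mem_support_append_iff]
  tauto

lemma length_rotate' [DecidableEq V] {x y : V} {D : G.Walk y y} (hx : x ∈ D.support) :
    (D.rotate _ hx).length = D.length := by
  rw [Walk.rotate, Walk.length_append]
  conv_rhs => rw [← Walk.take_spec D hx, Walk.length_append]
  omega

/-- arcs of a cycle: both takeUntil and dropUntil are paths -/
lemma cycle_arcs [DecidableEq V] {x w : V} {D : G.Walk x x} (hD : D.IsCycle) (hw : w ∈ D.support)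
    (hwx : w ≠ x) : (D.takeUntil w hw).IsPath ∧ (D.dropUntil w hw).IsPath := by
  have hspec := D.take_spec hw
  have hsupp : (D.takeUntil w hw).support ++ (D.dropUntil w hw).support.tail
      = D.support := by
    rw [← Walk.support_append, hspec]
  have hTsup : (D.takeUntil w hw).support
      = x :: (D.takeUntil w hw).support.tail := Walk.support_eq_cons _
  have hDsup : D.support = x :: D.support.tail := Walk.support_eq_cons _
  have htail : (D.takeUntil w hw).support.tail ++ (D.dropUntil w hw).support.tail
      = D.support.tail := by
    have := hsupp
    rw [hTsup, hDsup] at this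
    simp only [List.cons_append, List.cons.injEq, true_and] at this; exact this
  have hnd : D.support.tail.Nodup := hD.2
  rw [← htail, List.nodup_append] at hnd
  obtain ⟨h1, h2, hdisj⟩ := hnd
  -- x ∈ drop tail
  have hxdrop : x ∈ (D.dropUntil w hw).support.tail := by
    have hxd : x ∈ (D.dropUntil w hw).support := Walk.end_mem_support _
    rw [Walk.support_eq_cons (D.dropUntil w hw), List.mem_cons] at hxd
    rcases hxd with h | h
    · exact absurd h.symm hwx
    · exact h
  have hxT : x ∉ (D.takeUntil w hw).support.tail := fun hc => hdisj x hc x hxdrop rfl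
  -- w ∈ take tail
  have hwtake : w ∈ (D.takeUntil w hw).support.tail := by
    have hwt : w ∈ (D.takeUntil w hw).support := Walk.end_mem_support _
    rw [hTsup, List.mem_cons] at hwt
    rcases hwt with h | h
    · exact absurd h hwx
    · exact h
  have hwdrop : w ∉ (D.dropUntil w hw).support.tail := fun hc => hdisj w hwtake w hc rfl
  constructor
  · rw [Walk.isPath_def, hTsup]
    exact List.nodup_cons.mpr ⟨hxT, h1⟩
  · rw [Walk.isPath_def, Walk.support_eq_cons (D.dropUntil w hw)]
    exact List.nodup_cons.mpr ⟨hwdrop, h2⟩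

/-- first hit of a set along a walk -/
lemma first_hit {v t : V} (R : G.Walk v t) (S : Set V) (ht : t ∈ S) :
    ∃ (x : V) (_ : x ∈ S) (R' : G.Walk v x),
      (∀ y ∈ R'.support, y ∈ S → y = x) ∧ (∀ y ∈ R'.support, y ∈ R.support) := by
  classical
  induction R with
  | nil =>
    exact ⟨_, ht, Walk.nil, by simp +contextual, by simp⟩
  | @cons a b w h R₁ ih =>
    by_cases ha : a ∈ S
    · exact ⟨a, ha, Walk.nil, by simp +contextual, by simp⟩
    · obtain ⟨x, hx, R', hc1, hc2⟩ := ih ht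
      refine ⟨x, hx, Walk.cons h R', ?_, ?_⟩
      · intro y hy hyS
        rw [Walk.support_cons, List.mem_cons] at hy
        rcases hy with rfl | hy
        · exact absurd hyS ha
        · exact hc1 y hy hyS
      · intro y hy
        rw [Walk.support_cons, List.mem_cons] at hy
        rw [Walk.support_cons, List.mem_cons]
        rcases hy with rfl | hy
        · exact Or.inl rfl
        · exact Or.inr (hc2 y hy)

/-- glue a path from v to the cycle-arc A to build a cycle through u and v -/
lemma build_cycle {v x w u : V} (hvw : G.Adj v w) (S : Set V)
    (R : G.Walk v x) (hR : R.IsPath)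
    (A : G.Walk x w) (hA : A.IsPath)
    (hAS : ∀ y ∈ A.support, y ∈ S)
    (hRS : ∀ y ∈ R.support, y ∈ S → y = x)
    (hwR : w ∉ R.support) (hvS : v ∉ S) (huA : u ∈ A.support) :
    ∃ (z : V) (F : G.Walk z z), F.IsCycle ∧ u ∈ F.support ∧ v ∈ F.support := by
  classical
  have hxA : x ∉ A.support.tail := by
    have hnd := hA.support_nodup
    rw [Walk.support_eq_cons A, List.nodup_cons] at hnd
    exact hnd.1
  have hBsupp : (R.append A).support = R.support ++ A.support.tail :=
    Walk.support_append _ _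
  have hBpath : (R.append A).IsPath := by
    rw [Walk.isPath_def, hBsupp, List.nodup_append]
    refine ⟨hR.support_nodup, hA.support_nodup.tail, ?_⟩
    intro y hy y' hy2 hyy
    subst hyy
    have hyA : y ∈ A.support := List.mem_of_mem_tail hy2
    have : y = x := hRS y hy (hAS y hyA)
    subst this
    exact hxA hy2
  have hcyc : (Walk.cons hvw.symm (R.append A)).IsCycle := by
    rw [Walk.cons_isCycle_iff]
    refine ⟨hBpath, fun he => ?_⟩
    rw [Walk.edges_append, List.mem_append] at he
    rcases he with he | he
    · exact hwR (Walk.fst_mem_support_of_mem_edges R he)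
    · exact hvS (hAS v (Walk.snd_mem_support_of_mem_edges A he))
  refine ⟨w, _, hcyc, ?_, ?_⟩
  · rw [Walk.support_cons, List.mem_cons]
    right
    rw [Walk.mem_support_append_iff]
    exact Or.inr huA
  · rw [Walk.support_cons, List.mem_cons]
    right
    rw [Walk.mem_support_append_iff]
    exact Or.inl (Walk.start_mem_support R)

/-- any two distinct vertices of a 2-connected graph lie on a common cycle -/
lemma common_cycle (h3 : 3 ≤ Fintype.card V)
    (hconn : ∀ v : V, (G.induce ({v}ᶜ : Set V)).Connected) :
    ∀ (d : ℕ) (u v : V), u ≠ v → G.dist u v = d →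
      ∃ (z : V) (D : G.Walk z z), D.IsCycle ∧ u ∈ D.support ∧ v ∈ D.support := by
  classical
  have hG : G.Connected := conn_of_two h3 hconn
  intro d
  induction d using Nat.strong_induction_on with
  | _ d ih =>
  intro u v huv hd
  have hd1 : 1 ≤ d := by
    have := hG.pos_dist_of_ne huv
    omega
  by_cases hadj : G.Adj u v
  · -- base case
    obtain ⟨w, huw, hwv⟩ := exists_other_neighbor h3 hconn u v huv
    obtain ⟨R, hR, huR⟩ := walk_avoiding hconn u v w huv.symm huw.ne'
    have hconcat : (R.concat huw.symm).IsPath := by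
      rw [Walk.isPath_def, Walk.support_concat]
      rw [List.nodup_append]
      refine ⟨hR.support_nodup, List.nodup_singleton u, ?_⟩
      intro y hy y' hy2 hyy
      rw [List.mem_singleton] at hy2
      subst hy2
      subst hyy
      exact huR hy
    have hcyc : (Walk.cons hadj (R.concat huw.symm)).IsCycle := by
      rw [Walk.cons_isCycle_iff]
      refine ⟨hconcat, fun he => ?_⟩
      rw [Walk.edges_concat, List.concat_eq_append, List.mem_append] at he
      rcases he with he | he
      · exact huR (Walk.fst_mem_support_of_mem_edges R he)
      · rw [List.mem_singleton, Sym2.eq_iff] at he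
        rcases he with ⟨h1, h2⟩ | ⟨h1, h2⟩
        · exact huw.ne' h1.symm
        · exact hwv h2.symm
    refine ⟨u, _, hcyc, Walk.start_mem_support _, ?_⟩
    rw [Walk.support_cons, List.mem_cons]
    exact Or.inr (Walk.start_mem_support _)
  · -- inductive step: d ≥ 2
    have hd2 : 2 ≤ d := by
      by_contra hlt
      push_neg at hlt
      have hde : d = 1 := by omega
      rw [hde] at hd
      exact hadj ((dist_eq_one_iff_adj (G := G)).mp hd)
    obtain ⟨P₀, hP₀⟩ := hG.exists_walk_length_eq_dist u v
    have hvu : v ≠ u := huv.symm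
    obtain ⟨w, h, P₁, hP₁⟩ := (P₀.reverse).exists_eq_cons_of_ne hvu
    -- h : G.Adj v w, P₁ : G.Walk w u
    have hP₁len : P₁.length = d - 1 := by
      have : P₀.reverse.length = d := by rw [Walk.length_reverse, hP₀, hd]
      rw [hP₁, Walk.length_cons] at this
      omega
    have hdistuw : G.dist u w = d - 1 := by
      have hle : G.dist u w ≤ d - 1 := by
        rw [G.dist_comm]
        have := G.dist_le P₁
        omega
      have hge : d ≤ G.dist u w + 1 := by
        have htri := hG.dist_triangle (u := u) (v := w) (w := v)
        have : G.dist w v ≤ 1 := by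
          have := G.dist_le h.symm.toWalk
          simpa using this
        omega
      omega
    have huw : u ≠ w := by
      intro hc
      rw [← hc] at hdistuw
      rw [G.dist_self] at hdistuw
      omega
    obtain ⟨z, D, hD, huD, hwD⟩ := ih (d - 1) (by omega) u w huw hdistuw
    by_cases hvD : v ∈ D.support
    · exact ⟨z, D, hD, huD, hvD⟩
    · -- v not on D; connect v to D avoiding w
      obtain ⟨R, hRpath, hwR⟩ := walk_avoiding hconn w v u h.ne huw
      obtain ⟨x, hxD, R', hc1, hc2⟩ := first_hit R {y | y ∈ D.support}
        (by simpa using huD)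
      have hxD' : x ∈ D.support := hxD
      -- bypass R' to a path
      set R'' := R'.bypass with hR''def
      have hR''path : R''.IsPath := R'.bypass_isPath
      have hR''sub : ∀ y ∈ R''.support, y ∈ R'.support :=
        fun y hy => R'.support_bypass_subset hy
      have hwR'' : w ∉ R''.support := fun hc => hwR (hc2 w (hR''sub w hc))
      have hxw : x ≠ w := by
        intro hc
        have hxR : x ∈ R.support := hc2 x (hR''sub x (Walk.end_mem_support R''))
        rw [hc] at hxR
        exact hwR hxR
      -- rotate D at x
      have hD' := hD.rotate hxD'
      have hwD' : w ∈ (D.rotate _ hxD').support :=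
        (mem_support_rotate_iff hxD').mpr hwD
      have huD' : u ∈ (D.rotate _ hxD').support :=
        (mem_support_rotate_iff hxD').mpr huD
      obtain ⟨hT, hDr⟩ := cycle_arcs hD' hwD' hxw.symm
      -- u is on one of the two arcs
      have hsplit : u ∈ ((D.rotate _ hxD').takeUntil w hwD').support ∨
          u ∈ ((D.rotate _ hxD').dropUntil w hwD').support := by
        have := (D.rotate _ hxD').take_spec hwD'
        rw [← this, Walk.mem_support_append_iff] at huD'
        exact huD'
      have harcsubT : ∀ y ∈ ((D.rotate _ hxD').takeUntil w hwD').support,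
          y ∈ {y | y ∈ D.support} := by
        intro y hy
        have := Walk.support_takeUntil_subset _ hwD' hy
        simpa using (mem_support_rotate_iff hxD').mp this
      have harcsubD : ∀ y ∈ ((D.rotate _ hxD').dropUntil w hwD').support,
          y ∈ {y | y ∈ D.support} := by
        intro y hy
        have := Walk.support_dropUntil_subset _ hwD' hy
        simpa using (mem_support_rotate_iff hxD').mp this
      have hRS : ∀ y ∈ R''.support, y ∈ {y | y ∈ D.support} → y = x :=
        fun y hy hyS => hc1 y (hR''sub y hy) hyS
      have hvS : v ∉ {y | y ∈ D.support} := hvD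
      rcases hsplit with hu | hu
      · exact build_cycle h {y | y ∈ D.support} R'' hR''path
          ((D.rotate _ hxD').takeUntil w hwD') hT harcsubT hRS hwR'' hvS hu
      · have hArev : (((D.rotate _ hxD').dropUntil w hwD').reverse).IsPath := hDr.reverse
        refine build_cycle h {y | y ∈ D.support} R'' hR''path
          (((D.rotate _ hxD').dropUntil w hwD').reverse) hArev ?_ hRS hwR'' hvS ?_
        · intro y hy
          rw [Walk.support_reverse, List.mem_reverse] at hy
          exact harcsubD y hy
        · rw [Walk.support_reverse, List.mem_reverse]
          exact hu

/-- in a 2-connected graph with all cycles of length at most c, 2·dist ≤ c -/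
lemma two_dist_le {c : ℕ} (h3 : 3 ≤ Fintype.card V)
    (hconn : ∀ v : V, (G.induce ({v}ᶜ : Set V)).Connected)
    (hmax : ∀ (w : V) (d : G.Walk w w), d.IsCycle → d.length ≤ c)
    (u v : V) : 2 * G.dist u v ≤ c := by
  classical
  by_cases huv : u = v
  · rw [huv, G.dist_self]; omega
  · obtain ⟨z, D, hD, huD, hvD⟩ := common_cycle h3 hconn (G.dist u v) u v huv rfl
    have hD₁ := hD.rotate huD
    have hvD₁ : v ∈ (D.rotate _ huD).support := (mem_support_rotate_iff huD).mpr hvD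
    have hlen : (D.rotate _ huD).length = D.length := length_rotate' huD
    have hspec := (D.rotate _ huD).take_spec hvD₁
    have hsum : ((D.rotate _ huD).takeUntil v hvD₁).length
        + ((D.rotate _ huD).dropUntil v hvD₁).length = D.length := by
      rw [← hlen, ← Walk.length_append, hspec]
    have h1 : G.dist u v ≤ ((D.rotate _ huD).takeUntil v hvD₁).length :=
      G.dist_le _
    have h2 : G.dist u v ≤ ((D.rotate _ huD).dropUntil v hvD₁).length := by
      rw [G.dist_comm]
      exact G.dist_le _
    have := hmax z D hD
    omega

theorem path_short {c : ℕ} (h3 : 3 ≤ Fintype.card V)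
    (hconn : ∀ v : V, (G.induce ({v}ᶜ : Set V)).Connected)
    (hcyc : ∃ (w : V) (d : G.Walk w w), d.IsCycle ∧ d.length = c)
    (hmax : ∀ (w : V) (d : G.Walk w w), d.IsCycle → d.length ≤ c) :
    ∀ (u v : V) (p : G.Walk u v), p.IsPath → (p.length : ℝ) < (c : ℝ) ^ 2 / 2 := by
  classical
  have hc3 : 3 ≤ c := by
    obtain ⟨w, d, hd, hlen⟩ := hcyc
    rw [← hlen]
    exact hd.three_le_length
  have hG : G.Connected := conn_of_two h3 hconn
  intro u v p hp
  have key : 2 * p.length < c ^ 2 := by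
    by_cases huv : u = v
    · subst huv
      rw [(Walk.isPath_iff_eq_nil (p := p)).mp hp]
      simp only [Walk.length_nil, Nat.mul_zero]
      positivity
    · obtain ⟨Q, hQ⟩ := hG.exists_walk_length_eq_dist u v
      have hjump := jump hmax (by omega) Q p hp
      rw [hQ] at hjump
      have hdist := two_dist_le h3 hconn hmax u v
      have h1 : 2 * p.length ≤ (2 * G.dist u v) * (c - 1) := by
        calc 2 * p.length ≤ 2 * (G.dist u v * (c - 1)) := by omega
        _ = (2 * G.dist u v) * (c - 1) := by ring
      have h2 : (2 * G.dist u v) * (c - 1) ≤ c * (c - 1) :=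
        Nat.mul_le_mul_right _ hdist
      have h3' : c * (c - 1) < c ^ 2 := by
        have : c * (c - 1) = c * c - c := Nat.mul_sub_one c c ▸ by
          cases c with
          | zero => simp
          | succ n => simp [Nat.mul_sub, Nat.mul_one]
        rw [this, pow_two]
        have : c * c ≥ c * 3 := Nat.mul_le_mul_left _ hc3
        omega
      omega
  have : (2 * p.length : ℝ) < (c : ℝ) ^ 2 := by
    exact_mod_cast key
  linarith

end DiracAux

/-- If a 2-connected graph has circumference c (its longest cycle has length c),
then every path in it has fewer than c²/2 edges. -/
theorem path_short_of_circumference {V : Type*} [Fintype V] (G : SimpleGraph V)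
    (h2 : TwoConnected G) (c : ℕ)
    (hcyc : ∃ (w : V) (d : G.Walk w w), d.IsCycle ∧ d.length = c)
    (hmax : ∀ (w : V) (d : G.Walk w w), d.IsCycle → d.length ≤ c) :
    ∀ (u v : V) (p : G.Walk u v), p.IsPath → (p.length : ℝ) < (c : ℝ) ^ 2 / 2 :=
  DiracAux.path_short h2.1 h2.2 hcyc hmax
end

section
/- If a finite simple graph G has chromatic number at least n, then G contains every tree on n vertices as a subgraph. -/
open Finset

lemma greedy_color {V : Type*} [DecidableEq V] (G : SimpleGraph V) [DecidableRel G.Adj] (k : ℕ)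
    (H : ∀ S : Finset V, S.Nonempty → ∃ v ∈ S, (S.filter (G.Adj v)).card < k) :
    ∀ S : Finset V, ∃ C : V → ℕ, (∀ a ∈ S, C a < k) ∧
      ∀ a ∈ S, ∀ b ∈ S, G.Adj a b → C a ≠ C b := by
  intro S
  induction S using Finset.strongInduction with
  | _ S ih =>
    rcases S.eq_empty_or_nonempty with rfl | hSne
    · exact ⟨fun _ => 0, by simp, by simp⟩
    obtain ⟨v, hv, hd⟩ := H S hSne
    obtain ⟨C, hC1, hC2⟩ := ih (S.erase v) (Finset.erase_ssubset hv)
    set U : Finset ℕ := ((S.erase v).filter (G.Adj v)).image C with hU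
    have hUcard : U.card < k := by
      calc U.card ≤ ((S.erase v).filter (G.Adj v)).card := Finset.card_image_le
        _ ≤ (S.filter (G.Adj v)).card :=
            Finset.card_le_card (Finset.filter_subset_filter _ (Finset.erase_subset _ _))
        _ < k := hd
    obtain ⟨c, hck, hcU⟩ : ∃ c ∈ Finset.range k, c ∉ U := by
      by_contra h
      push_neg at h
      have : (Finset.range k).card ≤ U.card := Finset.card_le_card h
      simp only [Finset.card_range] at this
      omega
    rw [Finset.mem_range] at hck
    refine ⟨Function.update C v c, ?_, ?_⟩
    · intro a ha
      by_cases hav : a = v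
      · rw [hav, Function.update_self]; exact hck
      · rw [Function.update_of_ne hav]
        exact hC1 a (Finset.mem_erase.2 ⟨hav, ha⟩)
    · intro a ha b hb hab
      have hne : a ≠ b := hab.ne
      by_cases hav : a = v
      · have hbv : b ≠ v := fun h => hne (h ▸ hav)
        rw [hav, Function.update_self, Function.update_of_ne hbv]
        intro hEq
        exact hcU (hEq ▸ Finset.mem_image_of_mem C
          (Finset.mem_filter.2 ⟨Finset.mem_erase.2 ⟨hbv, hb⟩, hav ▸ hab⟩))
      · by_cases hbv : b = v
        · rw [hbv, Function.update_self, Function.update_of_ne hav]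
          intro hEq
          exact hcU (hEq.symm ▸ Finset.mem_image_of_mem C
            (Finset.mem_filter.2 ⟨Finset.mem_erase.2 ⟨hav, ha⟩, hbv ▸ hab.symm⟩))
        · rw [Function.update_of_ne hav, Function.update_of_ne hbv]
          exact hC2 a (Finset.mem_erase.2 ⟨hav, ha⟩) b (Finset.mem_erase.2 ⟨hbv, hb⟩) hab

section
variable {W : Type*} {T : SimpleGraph W} {x : W}

lemma lift_walk (hx : ∀ a b, T.Adj x a → T.Adj x b → a = b) :
    ∀ {u v : W} (p : T.Walk u v), p.IsPath → ∀ (hu : u ≠ x) (hv : v ≠ x),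
      (T.comap (Subtype.val : {w : W // w ≠ x} → W)).Reachable ⟨u, hu⟩ ⟨v, hv⟩ := by
  intro u v p
  induction p with
  | nil => intro _ hu hv; exact SimpleGraph.Reachable.refl _
  | cons h q ih =>
    rename_i a b c
    intro hp hu hv
    rw [SimpleGraph.Walk.cons_isPath_iff] at hp
    obtain ⟨hq, hns⟩ := hp
    by_cases hbx : b = x
    · subst hbx
      cases q with
      | nil => exact absurd rfl hv
      | cons h2 q2 =>
        rename_i d
        exfalso
        have had : a = d := hx a d h.symm h2
        apply hns
        rw [SimpleGraph.Walk.support_cons, had]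
        exact List.mem_cons_of_mem _ q2.start_mem_support
    · have hadj : (T.comap (Subtype.val : {w : W // w ≠ x} → W)).Adj ⟨a, hu⟩ ⟨b, hbx⟩ := h
      exact hadj.reachable.trans (ih hq hbx hv)

lemma comap_isTree (hT : T.IsTree) (hne : Nonempty {w : W // w ≠ x})
    (hx : ∀ a b, T.Adj x a → T.Adj x b → a = b) :
    (T.comap (Subtype.val : {w : W // w ≠ x} → W)).IsTree := by
  constructor
  · haveI := hne
    refine ⟨fun u v => ?_⟩
    obtain ⟨p, hp⟩ := (hT.existsUnique_path u.val v.val).exists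
    exact lift_walk hx p hp u.prop v.prop
  · intro v c hc
    have hinj : Function.Injective
        (SimpleGraph.Hom.comap (Subtype.val : {w : W // w ≠ x} → W) T) :=
      Subtype.val_injective
    exact hT.IsAcyclic _ (hc.map hinj)

end

universe u_tree

lemma tree_embed {V : Type*} [Fintype V] [DecidableEq V] (G : SimpleGraph V)
    [DecidableRel G.Adj] :
    ∀ (m : ℕ) (W : Type u_tree) (_ : Fintype W) (T : SimpleGraph W), T.IsTree →
      Fintype.card W = m → ∀ S : Finset V, S.Nonempty →
      (∀ v ∈ S, m - 1 ≤ (S.filter (G.Adj v)).card) →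
      ∃ f : W ↪ V, (∀ w, f w ∈ S) ∧ ∀ a b, T.Adj a b → G.Adj (f a) (f b) := by
  intro m
  induction m using Nat.strong_induction_on with
  | _ m ih =>
  intro W instW T hT hcard S hSne hS
  classical
  have hWne : Nonempty W := hT.isConnected.nonempty
  have hmpos : 0 < m := hcard ▸ Fintype.card_pos
  by_cases hm1 : m = 1
  · -- single vertex
    subst hm1
    obtain ⟨w0, hw0⟩ := Fintype.card_eq_one_iff.1 hcard
    obtain ⟨s0, hs0⟩ := hSne
    refine ⟨⟨fun _ => s0, fun a b _ => (hw0 a).trans (hw0 b).symm⟩, fun _ => hs0, ?_⟩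
    intro a b hab
    exact absurd ((hw0 a).trans (hw0 b).symm) hab.ne
  · have hm2 : 2 ≤ m := by omega
    -- find a leaf
    have hsum : ∑ w, T.degree w = 2 * T.edgeFinset.card :=
      T.sum_degrees_eq_twice_card_edges
    have hedge : T.edgeFinset.card + 1 = m := hcard ▸ hT.card_edgeFinset
    have hleaf : ∃ x, T.degree x ≤ 1 := by
      by_contra hcon
      push_neg at hcon
      have : (Finset.univ : Finset W).card • 2 ≤ ∑ w, T.degree w :=
        Finset.card_nsmul_le_sum _ _ _ (fun w _ => hcon w)
      rw [Finset.card_univ, hcard, smul_eq_mul] at this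
      omega
    obtain ⟨x, hxdeg⟩ := hleaf
    have hxdeg1 : T.degree x = 1 := by
      rcases Nat.lt_or_ge (T.degree x) 1 with h0 | h1
      · exfalso
        obtain ⟨y, hy⟩ := Fintype.exists_ne_of_one_lt_card (hcard ▸ hm2) x
        obtain ⟨p⟩ := hT.isConnected.preconnected x y
        cases p with
        | nil => exact hy rfl
        | cons hadj q =>
          have := T.degree_pos_iff_exists_adj x |>.2 ⟨_, hadj⟩
          omega
      · omega
    obtain ⟨p0, hp0⟩ := Finset.card_eq_one.1
      (by rw [← T.card_neighborFinset_eq_degree] at hxdeg1; exact hxdeg1)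
    have hp0adj : T.Adj x p0 := by
      rw [← SimpleGraph.mem_neighborFinset, hp0]; exact Finset.mem_singleton_self _
    have hx : ∀ a b, T.Adj x a → T.Adj x b → a = b := by
      intro a b ha hb
      have ha' : a ∈ T.neighborFinset x := (SimpleGraph.mem_neighborFinset _ _ _).2 ha
      have hb' : b ∈ T.neighborFinset x := (SimpleGraph.mem_neighborFinset _ _ _).2 hb
      rw [hp0, Finset.mem_singleton] at ha' hb'
      rw [ha', hb']
    have hp0ne : p0 ≠ x := hp0adj.ne'
    -- the smaller tree
    set W' := {w : W // w ≠ x} with hW'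
    have hcard' : Fintype.card W' = m - 1 := by
      have h1 : Fintype.card {w : W // ¬ w = x} =
          Fintype.card W - Fintype.card {w : W // w = x} :=
        Fintype.card_subtype_compl _
      rw [Fintype.card_subtype_eq, hcard] at h1
      exact h1
    have hne' : Nonempty W' := by
      rw [← Fintype.card_pos_iff, hcard']; omega
    set T' := T.comap (Subtype.val : W' → W) with hT'def
    have hT' : T'.IsTree := comap_isTree hT hne' hx
    obtain ⟨f', hf'S, hf'adj⟩ := ih (m - 1) (by omega) W' inferInstance T' hT' hcard' S hSne
      (fun v hv => le_trans (by omega) (hS v hv))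
    -- extend to the leaf
    set images : Finset V := Finset.univ.image (fun w : W' => f' w) with him
    have himcard : images.card = m - 1 := by
      rw [him, Finset.card_image_of_injective _ f'.injective, Finset.card_univ, hcard']
    set P : V := f' ⟨p0, hp0ne⟩ with hPdef
    have hPS : P ∈ S := hf'S _
    have hPim : P ∈ images := by
      rw [him]; exact Finset.mem_image_of_mem _ (Finset.mem_univ _)
    have hnb : m - 1 ≤ (S.filter (G.Adj P)).card := hS P hPS
    have key : ∃ y ∈ S.filter (G.Adj P), y ∉ images := by
      by_contra hcon
      push_neg at hcon
      have hsub : S.filter (G.Adj P) ⊆ images.erase P := by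
        intro y hy
        refine Finset.mem_erase.2 ⟨?_, hcon y hy⟩
        rintro rfl
        exact G.irrefl (Finset.mem_filter.1 hy).2
      have := Finset.card_le_card hsub
      rw [Finset.card_erase_of_mem hPim, himcard] at this
      omega
    obtain ⟨y, hynb, hyim⟩ := key
    have hyS : y ∈ S := (Finset.mem_filter.1 hynb).1
    have hyadj : G.Adj P y := (Finset.mem_filter.1 hynb).2
    have hfinj : Function.Injective (fun w : W => if h : w = x then y else f' ⟨w, h⟩) := by
      intro a b hab
      dsimp only at hab
      by_cases hax : a = x <;> by_cases hbx : b = x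
      · rw [hax, hbx]
      · exfalso
        rw [dif_pos hax, dif_neg hbx] at hab
        exact hyim (hab ▸ (by rw [him]; exact Finset.mem_image_of_mem _ (Finset.mem_univ _)))
      · exfalso
        rw [dif_neg hax, dif_pos hbx] at hab
        exact hyim (hab ▸ (by rw [him]; exact Finset.mem_image_of_mem _ (Finset.mem_univ _)))
      · rw [dif_neg hax, dif_neg hbx] at hab
        exact Subtype.mk_eq_mk.1 (f'.injective hab)
    refine ⟨⟨_, hfinj⟩, ?_, ?_⟩
    · intro w
      simp only [Function.Embedding.coeFn_mk]
      by_cases hwx : w = x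
      · rw [dif_pos hwx]; exact hyS
      · rw [dif_neg hwx]; exact hf'S _
    · intro a b hab
      simp only [Function.Embedding.coeFn_mk]
      by_cases hax : a = x
      · have hbx : b ≠ x := by
          intro h
          rw [hax, h] at hab
          exact T.irrefl hab
        have hb0 : b = p0 := hx b p0 (hax ▸ hab) hp0adj
        rw [dif_pos hax, dif_neg hbx]
        have hfb : f' ⟨b, hbx⟩ = P := by
          rw [hPdef]
          congr 1
          exact Subtype.ext hb0
        rw [hfb]
        exact hyadj.symm
      · by_cases hbx : b = x
        · have ha0 : a = p0 := hx a p0 (hbx ▸ hab.symm) hp0adj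
          rw [dif_neg hax, dif_pos hbx]
          have hfa : f' ⟨a, hax⟩ = P := by
            rw [hPdef]
            congr 1
            exact Subtype.ext ha0
          rw [hfa]
          exact hyadj
        · rw [dif_neg hax, dif_neg hbx]
          exact hf'adj ⟨a, hax⟩ ⟨b, hbx⟩ hab


/-- If a finite simple graph G has chromatic number at least n, then G contains
every tree on n vertices as a subgraph. -/
theorem tree_subgraph_of_chromaticNumber {V W : Type*} [Fintype V] [Fintype W]
    (G : SimpleGraph V) (T : SimpleGraph W) (n : ℕ)
    (hT : T.IsTree) (hW : Fintype.card W = n)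
    (hchrom : (n : ℕ∞) ≤ G.chromaticNumber) :
    ∃ f : W ↪ V, ∀ a b : W, T.Adj a b → G.Adj (f a) (f b) := by
  classical
  rcases Nat.eq_zero_or_pos n with rfl | hn
  · haveI : IsEmpty W := Fintype.card_eq_zero_iff.1 hW
    exact ⟨Function.Embedding.ofIsEmpty, fun a => isEmptyElim a⟩
  · by_cases hex : ∃ S : Finset V, S.Nonempty ∧ ∀ v ∈ S, n - 1 ≤ (S.filter (G.Adj v)).card
    · obtain ⟨S, hSne, hmin⟩ := hex
      obtain ⟨f, _, hfadj⟩ := tree_embed G n W inferInstance T hT hW S hSne hmin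
      exact ⟨f, hfadj⟩
    · exfalso
      push_neg at hex
      obtain ⟨C, hC1, hC2⟩ := greedy_color G (n - 1) hex Finset.univ
      have hcol : G.Colorable (n - 1) :=
        ⟨SimpleGraph.Coloring.mk (fun v => ⟨C v, hC1 v (Finset.mem_univ v)⟩)
          (fun {a b} hab h => hC2 a (Finset.mem_univ a) b (Finset.mem_univ b) hab
            (congrArg Fin.val h))⟩
      have hle := hcol.chromaticNumber_le
      have hfin : (n : ℕ∞) ≤ ((n - 1 : ℕ) : ℕ∞) := le_trans hchrom hle
      rw [Nat.cast_le] at hfin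
      omega
end
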